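/- Let F : E → E and N : E → E be differentiable vector fields with (DN)(x)(N(x)) = 0 for every x ∈ E, and let C : ℝ → E satisfy the curve evolution ∂C/∂t = ⟨F(C(t)), N(C(t))⟩ • N(C(t)) for all t. Then the second time derivative of C satisfies ∂²C/∂t² (t) = ⟨(DF)(C(t))(C′(t)), N(C(t))⟩ • N(C(t)); i.e. differentiating the evolution equation in time, the terms involving the derivative of the normal field vanish and only the Jacobian of F contributes. -/

import Mathlib

/-- Second time derivative of the curve evolution `∂C/∂t = ⟨F(C), N(C)⟩ N(C)`: since the
derivative of the normal field in the direction of motion vanishes, only the Jacobian of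
`F` contributes, giving `∂²C/∂t² = ⟨DF(C)(C′), N(C)⟩ N(C)`. -/
theorem second_deriv_curve_evolution_in_field
    {E : Type*} [NormedAddCommGroup E] [InnerProductSpace ℝ E] [CompleteSpace E]
    (F N : E → E) (hF : Differentiable ℝ F) (hN : Differentiable ℝ N)
    (hNN : ∀ x : E, fderiv ℝ N x (N x) = 0)
    (C : ℝ → E)
    (hC : ∀ t : ℝ, HasDerivAt C ((inner ℝ (F (C t)) (N (C t)) : ℝ) • N (C t)) t) :
    ∀ t : ℝ, deriv (deriv C) t =
      (inner ℝ (fderiv ℝ F (C t) (deriv C t)) (N (C t)) : ℝ) • N (C t) := by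
  intro t
  have hderiv : deriv C = fun t => (inner ℝ (F (C t)) (N (C t)) : ℝ) • N (C t) :=
    funext fun t => (hC t).deriv
  have hCtd : deriv C t = (inner ℝ (F (C t)) (N (C t)) : ℝ) • N (C t) := (hC t).deriv
  -- N ∘ C has derivative 0
  have hNC : HasDerivAt (fun s => N (C s)) 0 t := by
    have h := ((hN (C t)).hasFDerivAt.comp_hasDerivAt t (hC t))
    simpa [map_smul, hNN (C t), Function.comp_def] using h
  -- F ∘ C has derivative DF(C t)(deriv C t)
  have hFC : HasDerivAt (fun s => F (C s)) (fderiv ℝ F (C t) (deriv C t)) t := by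
    have h := ((hF (C t)).hasFDerivAt.comp_hasDerivAt t (hC t))
    rwa [hCtd]
  -- inner product has derivative ⟨DF(C)(C'), N(C)⟩
  have hg : HasDerivAt (fun s => (inner ℝ (F (C s)) (N (C s)) : ℝ))
      (inner ℝ (fderiv ℝ F (C t) (deriv C t)) (N (C t)) : ℝ) t := by
    have h := hFC.inner ℝ hNC
    simpa using h
  have hmain : HasDerivAt (fun s => (inner ℝ (F (C s)) (N (C s)) : ℝ) • N (C s))
      ((inner ℝ (fderiv ℝ F (C t) (deriv C t)) (N (C t)) : ℝ) • N (C t)) t := by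
    have h := hg.smul hNC
    simp at h
    exact h
  conv_lhs => rw [hderiv]
  exact hmain.deriv
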